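/- arXiv:2601.12853 — 2 statements merged into one kernel-verified Lean document; each statement's English description precedes it below -/
import Mathlib

section
/- Let Θ, S, X be random variables on a probability space taking values in finite sets, such that X = f(Θ, S) for some deterministic function f, S is independent of Θ, and X is independent of Θ. Then the Shannon entropies satisfy H(X) ≤ H(S). -/
open MeasureTheory ProbabilityTheory

noncomputable def entropy {Ω : Type*} [MeasurableSpace Ω] (μ : Measure Ω)
    {α : Type*} [Fintype α] (X : Ω → α) : ℝ :=
  - ∑ x : α, ((μ (X ⁻¹' {x})).toReal * Real.log (μ (X ⁻¹' {x})).toReal)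

lemma entropy_comp_le {Ω : Type*} [MeasurableSpace Ω] (μ : Measure Ω) [IsFiniteMeasure μ]
    {B C : Type*} [Fintype B] [MeasurableSpace B] [DiscreteMeasurableSpace B] [Fintype C]
    (g : B → C) (S : Ω → B) (hS : Measurable S) :
    entropy μ (g ∘ S) ≤ entropy μ S := by
  classical
  set q : B → ℝ := fun b => (μ (S ⁻¹' {b})).toReal with hqdef
  set p : C → ℝ := fun c => ∑ b ∈ Finset.univ.filter (fun b => g b = c), q b with hpdef
  have hq0 : ∀ b, 0 ≤ q b := fun b => ENNReal.toReal_nonneg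
  have hp0 : ∀ c, 0 ≤ p c := fun c => Finset.sum_nonneg fun b _ => hq0 b
  have hqp : ∀ b, q b ≤ p (g b) := by
    intro b
    apply Finset.single_le_sum (fun b _ => hq0 b)
    simp
  have hmeas : ∀ c : C, (μ ((g ∘ S) ⁻¹' {c})).toReal = p c := by
    intro c
    have hset : (g ∘ S) ⁻¹' {c} = ⋃ b ∈ Finset.univ.filter (fun b => g b = c), S ⁻¹' {b} := by
      ext ω
      simp [Set.mem_preimage]
    rw [hset, measure_biUnion_finset]
    · rw [ENNReal.toReal_sum]
      intro b _
      exact measure_ne_top μ _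
    · intro b _ b' _ hbb'
      apply Set.disjoint_left.mpr
      intro ω h1 h2
      simp only [Set.mem_preimage, Set.mem_singleton_iff] at h1 h2
      exact hbb' (h1 ▸ h2)
    · intro b _
      exact (MeasurableSet.singleton b).preimage hS
  unfold entropy
  rw [neg_le_neg_iff]
  have hgoal : ∑ c : C, ((μ ((g ∘ S) ⁻¹' {c})).toReal * Real.log (μ ((g ∘ S) ⁻¹' {c})).toReal)
      = ∑ c : C, p c * Real.log (p c) :=
    Finset.sum_congr rfl fun c _ => by rw [hmeas c]
  rw [hgoal]
  calc ∑ b : B, q b * Real.log (q b)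
      ≤ ∑ b : B, q b * Real.log (p (g b)) := by
        apply Finset.sum_le_sum
        intro b _
        rcases eq_or_lt_of_le (hq0 b) with h | h
        · simp [← h]
        · exact mul_le_mul_of_nonneg_left (Real.log_le_log h (hqp b)) (hq0 b)
    _ = ∑ c : C, p c * Real.log (p c) := by
        have h1 : ∑ b : B, q b * Real.log (p (g b))
            = ∑ c : C, ∑ b ∈ Finset.univ.filter (fun b => g b = c),
                q b * Real.log (p (g b)) := by
          exact (Finset.sum_fiberwise Finset.univ g
            (fun b => q b * Real.log (p (g b)))).symm
        rw [h1]
        refine Finset.sum_congr rfl fun c _ => ?_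
        rw [hpdef, Finset.sum_mul]
        exact Finset.sum_congr rfl fun b hb => by
          simp only [Finset.mem_filter] at hb
          rw [hb.2]

/-- If `X = f(Θ, S)` is a deterministic function of `Θ` and `S`, where `S` is independent
of `Θ` and `X` is independent of `Θ`, then `H(X) ≤ H(S)`. -/
theorem entropy_message_le_entropy_key
    {Ω : Type*} [MeasurableSpace Ω] (μ : Measure Ω) [IsProbabilityMeasure μ]
    {A B C : Type*} [Fintype A] [MeasurableSpace A] [DiscreteMeasurableSpace A]
    [Fintype B] [MeasurableSpace B] [DiscreteMeasurableSpace B]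
    [Fintype C] [MeasurableSpace C] [DiscreteMeasurableSpace C]
    (Θ : Ω → A) (S : Ω → B) (X : Ω → C)
    (hΘ : Measurable Θ) (hS : Measurable S) (hX : Measurable X)
    (f : A → B → C) (hfun : ∀ ω, X ω = f (Θ ω) (S ω))
    (hΘS : IndepFun Θ S μ) (hΘX : IndepFun Θ X μ) :
    entropy μ X ≤ entropy μ S := by
  classical
  -- pick θ0 with positive probability
  obtain ⟨θ0, hθ0⟩ : ∃ θ0 : A, μ (Θ ⁻¹' {θ0}) ≠ 0 := by
    by_contra h
    push_neg at h
    have : μ Set.univ = 0 := by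
      have : (Set.univ : Set Ω) = ⋃ a : A, Θ ⁻¹' {a} := by
        ext ω; simp
      rw [this]
      exact le_antisymm (le_trans (measure_iUnion_le _) (by simp [h])) zero_le
    simp [measure_univ] at this
  set g : B → C := f θ0 with hgdef
  have key : ∀ c : C, μ (X ⁻¹' {c}) = μ ((g ∘ S) ⁻¹' {c}) := by
    intro c
    have h1 : μ (Θ ⁻¹' {θ0} ∩ X ⁻¹' {c}) = μ (Θ ⁻¹' {θ0}) * μ (X ⁻¹' {c}) :=
      hΘX.measure_inter_preimage_eq_mul _ _ (MeasurableSet.singleton θ0)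
        (MeasurableSet.singleton c)
    have hseteq : Θ ⁻¹' {θ0} ∩ X ⁻¹' {c} = Θ ⁻¹' {θ0} ∩ S ⁻¹' (g ⁻¹' {c}) := by
      ext ω
      simp only [Set.mem_inter_iff, Set.mem_preimage, Set.mem_singleton_iff]
      constructor
      · rintro ⟨hθ, hx⟩
        refine ⟨hθ, ?_⟩
        rw [hgdef]
        rw [hfun ω, hθ] at hx
        exact hx
      · rintro ⟨hθ, hs⟩
        refine ⟨hθ, ?_⟩
        rw [hfun ω, hθ]
        exact hs
    have h2 : μ (Θ ⁻¹' {θ0} ∩ S ⁻¹' (g ⁻¹' {c})) = μ (Θ ⁻¹' {θ0}) * μ (S ⁻¹' (g ⁻¹' {c})) :=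
      hΘS.measure_inter_preimage_eq_mul _ _ (MeasurableSet.singleton θ0)
        (MeasurableSet.of_discrete)
    have h3 : μ (Θ ⁻¹' {θ0}) * μ (X ⁻¹' {c}) = μ (Θ ⁻¹' {θ0}) * μ (S ⁻¹' (g ⁻¹' {c})) := by
      rw [← h1, hseteq, h2]
    rw [Set.preimage_comp]
    exact (ENNReal.mul_right_inj hθ0 (measure_ne_top μ _)).mp h3
  have hent : entropy μ X = entropy μ (g ∘ S) := by
    unfold entropy
    congr 1
    exact Finset.sum_congr rfl fun c _ => by rw [key c]
  rw [hent]
  exact entropy_comp_le μ g S hS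
end

section
/- Let K ≥ 2 and m be integers with 1 ≤ m ≤ K - 1, and let p be a prime with p ≥ K. Then there exists a K × m matrix G over the field F_p = ZMod p such that the sum of all K rows of G is the zero vector, and every subset of m rows of G is linearly independent. -/
open Polynomial Finset

/-- Existence of a key-generation matrix: for `2 ≤ K`, `1 ≤ m ≤ K - 1` and a prime
`p ≥ K`, there is a `K × m` matrix over `F_p` whose rows sum to zero and any `m` of
whose rows are linearly independent. -/
theorem exists_key_generator_matrix
    (K m p : ℕ) (hK : 2 ≤ K) (hm1 : 1 ≤ m) (hm2 : m ≤ K - 1)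
    (hp : p.Prime) (hpK : K ≤ p) :
    ∃ G : Matrix (Fin K) (Fin m) (ZMod p),
      (∑ k, G k = 0) ∧
      ∀ T : Finset (Fin K), T.card = m →
        LinearIndependent (ZMod p) (fun k : T => G k) := by
  haveI : Fact p.Prime := ⟨hp⟩
  set v : Fin K → ZMod p := fun k => (k : ℕ) with hv
  have hvinj : Function.Injective v := by
    intro a b h
    have ha : ((a : ℕ) : ZMod p).val = (a : ℕ) := ZMod.val_cast_of_lt (lt_of_lt_of_le a.isLt hpK)
    have hb : ((b : ℕ) : ZMod p).val = (b : ℕ) := ZMod.val_cast_of_lt (lt_of_lt_of_le b.isLt hpK)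
    apply Fin.ext
    rw [← ha, ← hb]
    exact congrArg ZMod.val h
  set c : Fin K → ZMod p := fun k => ∏ i ∈ Finset.univ.erase k, (v k - v i)⁻¹ with hc
  have hcne : ∀ k, c k ≠ 0 := by
    intro k
    refine Finset.prod_ne_zero_iff.2 fun i hi => ?_
    have : v k ≠ v i := fun h => (Finset.mem_erase.1 hi).1 (hvinj h).symm
    exact inv_ne_zero (sub_ne_zero.2 this)
  have hcard : (Finset.univ : Finset (Fin K)).card = K := by simp
  -- leading coefficient of Lagrange basis polynomials
  have hbcoeff : ∀ k : Fin K,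
      (Lagrange.basis Finset.univ v k).coeff (K - 1) = c k := by
    intro k
    have hnd : (Lagrange.basis Finset.univ v k).natDegree = K - 1 := by
      rw [Lagrange.natDegree_basis hvinj.injOn (Finset.mem_univ k), hcard]
    rw [← hnd, Polynomial.coeff_natDegree, Lagrange.basis, Polynomial.leadingCoeff_prod]
    refine Finset.prod_congr rfl fun i hi => ?_
    have hne : v k ≠ v i := fun h => (Finset.mem_erase.1 hi).1 (hvinj h).symm
    rw [Lagrange.basisDivisor, Polynomial.leadingCoeff_mul, Polynomial.leadingCoeff_C,
      (Polynomial.monic_X_sub_C (v i)).leadingCoeff, mul_one]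
  -- key identity
  have key : ∀ j : ℕ, j < K - 1 → ∑ k : Fin K, c k * v k ^ j = 0 := by
    intro j hj
    have hdeg : ((X : (ZMod p)[X]) ^ j).degree < ((Finset.univ : Finset (Fin K)).card : ℕ) := by
      rw [Polynomial.degree_X_pow, hcard]
      exact_mod_cast lt_of_lt_of_le hj (Nat.sub_le K 1)
    have hinterp := Lagrange.eq_interpolate (v := v) (f := (X : (ZMod p)[X]) ^ j)
      hvinj.injOn hdeg
    have hco := congrArg (fun q : (ZMod p)[X] => q.coeff (K - 1)) hinterp
    simp only [Lagrange.interpolate_apply, Polynomial.finset_sum_coeff,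
      Polynomial.coeff_C_mul, Polynomial.eval_pow, Polynomial.eval_X,
      Polynomial.coeff_X_pow] at hco
    rw [if_neg (Ne.symm (Nat.ne_of_lt hj))] at hco
    calc ∑ k : Fin K, c k * v k ^ j
        = ∑ x : Fin K, v x ^ j * (Lagrange.basis Finset.univ v x).coeff (K - 1) :=
          Finset.sum_congr rfl fun k _ => by rw [hbcoeff k]; ring
      _ = 0 := hco.symm
  -- the matrix
  refine ⟨Matrix.of fun k j => c k * v k ^ (j : ℕ), ?_, ?_⟩
  · funext j
    have hj : (j : ℕ) < K - 1 := lt_of_lt_of_le j.isLt hm2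
    refine (Finset.sum_apply j Finset.univ (fun k => fun j : Fin m => c k * v k ^ (j : ℕ))).trans ?_
    simpa using key (j : ℕ) hj
  · intro T hT
    have e : Fin m ≃ {x // x ∈ T} := (finCongr hT.symm).trans T.equivFin.symm
    rw [← linearIndependent_equiv e]
    have heinj : Function.Injective fun i : Fin m => v ((e i) : Fin K) := by
      intro a b h
      exact e.injective (Subtype.ext (hvinj h))
    have hdet : (Matrix.of fun i j : Fin m => c (e i : Fin K) * v (e i : Fin K) ^ (j : ℕ)).det ≠ 0 := by
      have hfac : (Matrix.of fun i j : Fin m => c (e i : Fin K) * v (e i : Fin K) ^ (j : ℕ))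
          = Matrix.diagonal (fun i => c (e i : Fin K)) *
            Matrix.vandermonde (fun i => v (e i : Fin K)) := by
        ext i j
        simp [Matrix.diagonal_mul, Matrix.vandermonde]
      rw [hfac, Matrix.det_mul, Matrix.det_diagonal, Matrix.det_vandermonde]
      refine mul_ne_zero (Finset.prod_ne_zero_iff.2 fun i _ => hcne _) ?_
      refine Finset.prod_ne_zero_iff.2 fun i _ => Finset.prod_ne_zero_iff.2 fun j hj => ?_
      have : i ≠ j := (Finset.mem_Ioi.1 hj).ne
      exact sub_ne_zero.2 fun h => this (heinj h.symm)
    have hunit : IsUnit (Matrix.of fun i j : Fin m => c (e i : Fin K) * v (e i : Fin K) ^ (j : ℕ)) := by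
      rw [Matrix.isUnit_iff_isUnit_det]
      exact isUnit_iff_ne_zero.2 hdet
    exact Matrix.linearIndependent_rows_iff_isUnit.2 hunit
end
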